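/- Let Γ be an infinite abelian group, let (R,S) be a sufficient pair of subsets of Γ (i.e., for every finite set E ⊂ Γ there exists γ ∈ Γ with -γ + E ⊂ R and γ + E ⊂ S, where finite sets play the role of compact sets in the discrete setting), and let A ⊂ Γ be finite. Then (R \ A, S \ A) is also a sufficient pair. -/
import Mathlib


/-- If `(R, S)` is a sufficient pair in an infinite abelian group `Γ` and `A ⊆ Γ` is finite,
then `(R \ A, S \ A)` is also a sufficient pair. -/
theorem stmt_1 {Γ : Type*} [AddCommGroup Γ] [Infinite Γ]
    (R S : Set Γ)
    (hRS : ∀ E : Finset Γ, ∃ γ : Γ, (∀ x ∈ E, -γ + x ∈ R) ∧ (∀ x ∈ E, γ + x ∈ S))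
    (A : Finset Γ) :
    ∀ E : Finset Γ, ∃ γ : Γ,
      (∀ x ∈ E, -γ + x ∈ R \ (A : Set Γ)) ∧ (∀ x ∈ E, γ + x ∈ S \ (A : Set Γ)) := by
  classical
  intro E
  -- the finite set of bad shifts
  set B : Finset Γ := ((E ×ˢ A).image (fun p => p.1 - p.2)) ∪
      ((A ×ˢ E).image (fun p => p.1 - p.2)) with hB
  obtain ⟨t, ht⟩ := Infinite.exists_notMem_finset B
  set E' : Finset Γ := (insert t B).biUnion
      (fun b => E.image (fun x => b + x) ∪ E.image (fun x => -b + x)) with hE'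
  obtain ⟨γ, h1, h2⟩ := hRS E'
  -- some γ - b with b ∈ insert t B avoids B
  have hinj : Set.InjOn (fun b => γ - b) (insert t B : Finset Γ) := by
    intro a _ b _ h
    have : γ - a = γ - b := h
    exact sub_right_injective this
  have hcard : B.card < ((insert t B).image (fun b => γ - b)).card := by
    rw [Finset.card_image_of_injOn hinj]
    exact Finset.card_lt_card (Finset.ssubset_insert ht)
  have : ¬ ((insert t B).image (fun b => γ - b)) ⊆ B := fun h =>
    absurd (Finset.card_le_card h) (not_le.mpr hcard)
  obtain ⟨c, hc, hcB⟩ := Finset.not_subset.mp this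
  obtain ⟨b, hb, rfl⟩ := Finset.mem_image.mp hc
  refine ⟨γ - b, fun x hx => ?_, fun x hx => ?_⟩
  · have hmem : b + x ∈ E' := by
      refine Finset.mem_biUnion.mpr ⟨b, hb, ?_⟩
      exact Finset.mem_union_left _ (Finset.mem_image_of_mem _ hx)
    have hR : -(γ - b) + x ∈ R := by
      have := h1 _ hmem
      simpa [sub_eq_add_neg, add_comm, add_left_comm, add_assoc] using this
    refine ⟨hR, fun hA => ?_⟩
    apply hcB
    have hAmem : -(γ - b) + x ∈ A := hA
    have : γ - b = x - (-(γ - b) + x) := by abel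
    rw [hB]
    refine Finset.mem_union_left _ ?_
    refine Finset.mem_image.mpr ⟨(x, -(γ - b) + x), ?_, ?_⟩
    · exact Finset.mem_product.mpr ⟨hx, hAmem⟩
    · exact this.symm
  · have hmem : -b + x ∈ E' := by
      refine Finset.mem_biUnion.mpr ⟨b, hb, ?_⟩
      exact Finset.mem_union_right _ (Finset.mem_image_of_mem _ hx)
    have hS : (γ - b) + x ∈ S := by
      have := h2 _ hmem
      simpa [sub_eq_add_neg, add_comm, add_left_comm, add_assoc] using this
    refine ⟨hS, fun hA => ?_⟩
    apply hcB
    have hAmem : (γ - b) + x ∈ A := hA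
    have : γ - b = ((γ - b) + x) - x := by abel
    rw [hB]
    refine Finset.mem_union_right _ ?_
    exact Finset.mem_image.mpr ⟨((γ - b) + x, x), Finset.mem_product.mpr ⟨hAmem, hx⟩, this.symm⟩
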